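/- Let cen(x) = (lt(x) + rt(x))/2 where lt(x) = min_i x_i and rt(x) = max_i x_i. If (a_k, a_{k+1}) ∈ AP is a peak of cen(x), then (a_k, a_{k+1}) is an optimal solution under the maximum cost objective: mc((a_k, a_{k+1}), x) ≤ mc(y, x) for every feasible outcome y. -/

import Mathlib

/-- Max-variant cost of an agent at `t` for two facilities at `y = (y₁, y₂)`. -/
noncomputable def cost (y : ℝ × ℝ) (t : ℝ) : ℝ := max |y.1 - t| |y.2 - t|

/-- A feasible outcome places the two facilities at two distinct copies of the
multiset `{a 1, …, a m}` (1-based indices). -/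
def Feasible (m : ℕ) (a : ℕ → ℝ) (y : ℝ × ℝ) : Prop :=
  ∃ j k : ℕ, 1 ≤ j ∧ j ≤ m ∧ 1 ≤ k ∧ k ≤ m ∧ j ≠ k ∧ y = (a j, a k)

/-- Maximum cost of an outcome `y` for the profile `x` (for `n ≥ 1` this is the
maximum of the agents' costs). -/
noncomputable def mc (n : ℕ) (y : ℝ × ℝ) (x : Fin n → ℝ) : ℝ :=
  ⨆ i, cost y (x i)

/-- Leftmost agent location (for `n ≥ 1`). -/
noncomputable def lt (n : ℕ) (x : Fin n → ℝ) : ℝ := ⨅ i, x i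

/-- Rightmost agent location (for `n ≥ 1`). -/
noncomputable def rt (n : ℕ) (x : Fin n → ℝ) : ℝ := ⨆ i, x i

/-- convexity of distance: a point between `u` and `v` is no farther from `c`. -/
lemma abs_mem_aux (u v c t : ℝ) (h1 : u ≤ t) (h2 : t ≤ v) :
    |t - c| ≤ max |u - c| |v - c| := by
  rcases le_total t c with h | h
  · have h3 : -(u - c) ≤ |u - c| := neg_le_abs _
    have h4 : |t - c| = -(t - c) := abs_of_nonpos (by linarith)
    exact le_max_of_le_left (by linarith)
  · have h3 : v - c ≤ |v - c| := le_abs_self _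
    have h4 : |t - c| = t - c := abs_of_nonneg (by linarith)
    exact le_max_of_le_right (by linarith)

/-- distance to the farther endpoint equals distance to center plus half-width. -/
lemma endpoint_aux (L R u : ℝ) (h : L ≤ R) :
    max |u - L| |u - R| = |u - (L + R) / 2| + (R - L) / 2 := by
  rcases le_total u ((L + R) / 2) with h1 | h1
  · rw [abs_of_nonpos (by linarith : u - R ≤ 0),
      abs_of_nonpos (by linarith : u - (L + R) / 2 ≤ 0),
      max_eq_right (abs_le.mpr ⟨by linarith, by linarith⟩)]
    ring
  · rw [abs_of_nonneg (by linarith : 0 ≤ u - L),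
      abs_of_nonneg (by linarith : 0 ≤ u - (L + R) / 2),
      max_eq_left (abs_le.mpr ⟨by linarith, by linarith⟩)]
    ring

theorem stmt_8 (n m : ℕ) (hn : 0 < n) (hm : 2 ≤ m) (a : ℕ → ℝ)
    (ha : ∀ j k : ℕ, 1 ≤ j → j ≤ k → k ≤ m → a j ≤ a k)
    (x : Fin n → ℝ) (k : ℕ) (hk1 : 1 ≤ k) (hk2 : k < m)
    -- `(a k, a (k+1))` is a peak of `cen x = (lt x + rt x) / 2`
    (hpeak : ∀ j : ℕ, 1 ≤ j → j < m →
      cost (a k, a (k + 1)) ((lt n x + rt n x) / 2) ≤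
        cost (a j, a (j + 1)) ((lt n x + rt n x) / 2)) :
    ∀ y : ℝ × ℝ, Feasible m a y → mc n (a k, a (k + 1)) x ≤ mc n y x := by
  intro y hy
  obtain ⟨j, k', hj1, hjm, hk'1, hk'm, hjk, rfl⟩ := hy
  haveI : Nonempty (Fin n) := ⟨⟨0, hn⟩⟩
  obtain ⟨i0, hi0⟩ := Finite.exists_min x
  obtain ⟨i1, hi1⟩ := Finite.exists_max x
  set L := x i0 with hLdef
  set R := x i1 with hRdef
  have hLR : L ≤ R := hi0 i1
  have hL : lt n x = L :=
    le_antisymm (ciInf_le (Set.finite_range x).bddBelow i0) (le_ciInf hi0)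
  have hR : rt n x = R :=
    le_antisymm (ciSup_le hi1) (le_ciSup (Set.finite_range x).bddAbove i1)
  set c : ℝ := (lt n x + rt n x) / 2 with hc
  have hcLR : c = (L + R) / 2 := by rw [hc, hL, hR]
  set w : ℝ := (R - L) / 2 with hw
  -- upper bound on mc for any pair
  have mc_le : ∀ u v : ℝ, mc n (u, v) x ≤ max |u - c| |v - c| + w := by
    intro u v
    apply ciSup_le
    intro i
    have h1 : L ≤ x i := hi0 i
    have h2 : x i ≤ R := hi1 i
    have e1 : |u - x i| ≤ |u - c| + w := by
      calc |u - x i| ≤ max |u - L| |u - R| := by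
              rw [abs_sub_comm u (x i), abs_sub_comm u L, abs_sub_comm u R]
              exact abs_mem_aux L R u (x i) h1 h2
        _ = |u - c| + w := by rw [endpoint_aux L R u hLR, hcLR, hw]
    have e2 : |v - x i| ≤ |v - c| + w := by
      calc |v - x i| ≤ max |v - L| |v - R| := by
              rw [abs_sub_comm v (x i), abs_sub_comm v L, abs_sub_comm v R]
              exact abs_mem_aux L R v (x i) h1 h2
        _ = |v - c| + w := by rw [endpoint_aux L R v hLR, hcLR, hw]
    simp only [cost]
    exact max_le (e1.trans (add_le_add_left (le_max_left _ _) w))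
      (e2.trans (add_le_add_left (le_max_right _ _) w))
  -- lower bound on mc for any pair
  have mc_ge : ∀ u v : ℝ, max |u - c| |v - c| + w ≤ mc n (u, v) x := by
    intro u v
    have bdd : BddAbove (Set.range fun i => cost (u, v) (x i)) :=
      (Set.finite_range _).bddAbove
    have gL : cost (u, v) L ≤ mc n (u, v) x := le_ciSup bdd i0
    have gR : cost (u, v) R ≤ mc n (u, v) x := le_ciSup bdd i1
    have key : max |u - c| |v - c| + w = max (cost (u, v) L) (cost (u, v) R) := by
      simp only [cost]
      rw [max_max_max_comm, endpoint_aux L R u hLR, endpoint_aux L R v hLR,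
        max_add_add_right, hcLR, hw]
    rw [key]
    exact max_le gL gR
  -- comparison at the center
  have hcenter : max |a k - c| |a (k + 1) - c| ≤ max |a j - c| |a k' - c| := by
    rcases hjk.lt_or_gt with h | h
    · -- j < k'
      have hjm' : j < m := lt_of_lt_of_le h hk'm
      have step : max |a k - c| |a (k + 1) - c| ≤ max |a j - c| |a (j + 1) - c| :=
        hpeak j hj1 hjm'
      have hmid : a j ≤ a (j + 1) := ha j (j + 1) hj1 (Nat.le_succ j) hjm'
      have hmid2 : a (j + 1) ≤ a k' := ha (j + 1) k' (le_trans hj1 (Nat.le_succ j)) h hk'm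
      have nest : max |a j - c| |a (j + 1) - c| ≤ max |a j - c| |a k' - c| :=
        max_le (le_max_left _ _) (abs_mem_aux (a j) (a k') c (a (j + 1)) hmid hmid2)
      exact step.trans nest
    · -- k' < j
      have hk'm' : k' < m := lt_of_lt_of_le h hjm
      have step : max |a k - c| |a (k + 1) - c| ≤ max |a k' - c| |a (k' + 1) - c| :=
        hpeak k' hk'1 hk'm'
      have hmid : a k' ≤ a (k' + 1) := ha k' (k' + 1) hk'1 (Nat.le_succ k') hk'm'
      have hmid2 : a (k' + 1) ≤ a j := ha (k' + 1) j (le_trans hk'1 (Nat.le_succ k')) h hjm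
      have nest : max |a k' - c| |a (k' + 1) - c| ≤ max |a k' - c| |a j - c| :=
        max_le (le_max_left _ _) (abs_mem_aux (a k') (a j) c (a (k' + 1)) hmid hmid2)
      exact step.trans (nest.trans (le_of_eq (max_comm _ _)))
  calc mc n (a k, a (k + 1)) x ≤ max |a k - c| |a (k + 1) - c| + w := mc_le _ _
    _ ≤ max |a j - c| |a k' - c| + w := add_le_add_left hcenter w
    _ ≤ mc n (a j, a k') x := mc_ge _ _
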